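/- Let $X$ be a real Hilbert space and $J : X \to \mathbb{R}$ a sequentially weakly upper semicontinuous $C^1$ functional with $J'$ Lipschitz of constant $L$. Fix $x_0 \in X$ with $J'(x_0) \ne 0$, set $\alpha_0 = \inf_{x \in M} J(x)$ where $M$ is the set of global minima of $x \mapsto \tfrac{1}{2}\|x-x_0\|^2 - \tfrac{1}{L} J(x)$. Then for every $r \in (J(x_0), \alpha_0)$, there exists a unique $y_r \in J^{-1}(r)$ with $\|x_0 - y_r\| = \mathrm{dist}(x_0, J^{-1}(r))$. -/

import Mathlib

open scoped NNReal ENNReal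

open Filter

set_option maxHeartbeats 2000000

local notation "⟪" a ", " b "⟫" => @inner ℝ _ _ a b

lemma descent_aux {X : Type*} [NormedAddCommGroup X] [InnerProductSpace ℝ X] [CompleteSpace X]
    (J : X → ℝ) (J' : X → X) (hgrad : ∀ x : X, HasGradientAt J (J' x) x)
    (ℓ : ℝ) (hlip : ∀ a b : X, ‖J' a - J' b‖ ≤ ℓ * ‖a - b‖)
    (x v : X) : J (x + v) ≤ J x + ⟪J' x, v⟫ + ℓ / 2 * ‖v‖ ^ 2 := by
  set g : ℝ → ℝ := fun t => J (x + t • v) - t * ⟪J' x, v⟫ - ℓ / 2 * t ^ 2 * ‖v‖ ^ 2 with hg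
  have hderiv : ∀ t : ℝ, HasDerivAt g (⟪J' (x + t • v), v⟫ - ⟪J' x, v⟫ - ℓ * t * ‖v‖ ^ 2) t := by
    intro t
    have h1 : HasDerivAt (fun t : ℝ => x + t • v) v t := by
      simpa using ((hasDerivAt_id t).smul_const v).const_add x
    have h2 : HasDerivAt (fun t : ℝ => J (x + t • v)) ⟪J' (x + t • v), v⟫ t := by
      have := ((hgrad (x + t • v)).hasFDerivAt.comp_hasDerivAt t h1)
      simpa [InnerProductSpace.toDual_apply_apply, Function.comp_def] using this
    have h3 : HasDerivAt (fun t : ℝ => t * ⟪J' x, v⟫) ⟪J' x, v⟫ t := by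
      simpa using (hasDerivAt_id t).mul_const (⟪J' x, v⟫ : ℝ)
    have h4 : HasDerivAt (fun t : ℝ => ℓ / 2 * t ^ 2 * ‖v‖ ^ 2) (ℓ * t * ‖v‖ ^ 2) t := by
      have := ((hasDerivAt_pow 2 t).const_mul (ℓ / 2)).mul_const (‖v‖ ^ 2)
      exact this.congr_deriv (by rw [show (2:ℕ) - 1 = 1 from rfl]; push_cast; ring)
    exact (h2.sub h3).sub h4
  have hanti : AntitoneOn g (Set.Icc 0 1) := by
    apply antitoneOn_of_deriv_nonpos (convex_Icc 0 1)
    · exact fun t _ => (hderiv t).continuousAt.continuousWithinAt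
    · exact fun t _ => (hderiv t).differentiableAt.differentiableWithinAt
    · intro t ht
      rw [interior_Icc] at ht
      rw [(hderiv t).deriv]
      have hineq : ⟪J' (x + t • v) - J' x, v⟫ ≤ ℓ * t * ‖v‖ ^ 2 := by
        calc ⟪J' (x + t • v) - J' x, v⟫ ≤ ‖J' (x + t • v) - J' x‖ * ‖v‖ :=
              real_inner_le_norm _ _
          _ ≤ (ℓ * ‖(x + t • v) - x‖) * ‖v‖ :=
              mul_le_mul_of_nonneg_right (hlip _ _) (norm_nonneg v)
          _ = ℓ * t * ‖v‖ ^ 2 := by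
              rw [add_sub_cancel_left, norm_smul]
              simp [abs_of_pos ht.1]
              ring
      rw [inner_sub_left] at hineq
      linarith
  have h01 := hanti (Set.left_mem_Icc.2 zero_le_one) (Set.right_mem_Icc.2 zero_le_one) zero_le_one
  simp only [hg] at h01
  simp only [zero_smul, add_zero, zero_mul, zero_pow, mul_zero, sub_zero, one_smul, one_mul,
    one_pow, mul_one] at h01
  linarith

lemma strongmin_aux {X : Type*} [NormedAddCommGroup X] [InnerProductSpace ℝ X] [CompleteSpace X]
    (J : X → ℝ) (J' : X → X) (hgrad : ∀ x : X, HasGradientAt J (J' x) x)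
    (ℓ : ℝ) (hlip : ∀ a b : X, ‖J' a - J' b‖ ≤ ℓ * ‖a - b‖)
    (x₀ : X) (lam : ℝ) (hlam : 0 ≤ lam)
    (y : X) (hy : y = x₀ + lam • J' y) (x : X) :
    1 / 2 * ‖y - x₀‖ ^ 2 - lam * J y + (1 - lam * ℓ) / 2 * ‖x - y‖ ^ 2 ≤
      1 / 2 * ‖x - x₀‖ ^ 2 - lam * J x := by
  have hdesc := descent_aux J J' hgrad ℓ hlip y (x - y)
  rw [show y + (x - y) = x by abel] at hdesc
  have hexp : ‖x - x₀‖ ^ 2 = ‖y - x₀‖ ^ 2 + 2 * ⟪y - x₀, x - y⟫ + ‖x - y‖ ^ 2 := by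
    rw [show x - x₀ = (y - x₀) + (x - y) by rw [add_comm, sub_add_sub_cancel], norm_add_sq_real]
  have hyx : y - x₀ = lam • J' y := by
    conv_lhs => rw [hy]
    abel
  have hin : ⟪y - x₀, x - y⟫ = lam * ⟪J' y, x - y⟫ := by
    rw [hyx, real_inner_smul_left]
  have hmul := mul_le_mul_of_nonneg_left hdesc hlam
  nlinarith [hmul, hexp, hin]

theorem stmt10 {X : Type*} [NormedAddCommGroup X] [InnerProductSpace ℝ X] [CompleteSpace X]
    (J : X → ℝ) (J' : X → X)
    (hgrad : ∀ x : X, HasGradientAt J (J' x) x) (hcont : Continuous J')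
    (hsw : ∀ (u : ℕ → X) (y : X),
      Tendsto (fun n => toWeakSpace ℝ X (u n)) atTop (nhds (toWeakSpace ℝ X y)) →
        limsup (fun n => J (u n)) atTop ≤ J y)
    (L : ℝ≥0) (hL : 0 < (L : ℝ)) (hLip : LipschitzWith L J')
    (x₀ : X) (hx₀ : J' x₀ ≠ 0)
    (M : Set X)
    (hM : M = {z : X | ∀ x : X, (1 / 2 : ℝ) * ‖z - x₀‖ ^ 2 - (1 / L) * J z ≤
      (1 / 2 : ℝ) * ‖x - x₀‖ ^ 2 - (1 / L) * J x})
    (r : ℝ) (hr₁ : J x₀ < r) (hr₂ : (r : EReal) < ⨅ x ∈ M, (J x : EReal)) :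
    ∃! y : X, J y = r ∧ ‖x₀ - y‖ = Metric.infDist x₀ {x : X | J x = r} := by
  classical
  have hJcont : Continuous J := continuous_iff_continuousAt.2 fun x =>
    (hgrad x).hasFDerivAt.continuousAt
  have hl0 : (0 : ℝ) < (L : ℝ) := hL
  have hlip : ∀ a b : X, ‖J' a - J' b‖ ≤ (L : ℝ) * ‖a - b‖ := by
    intro a b
    simpa [dist_eq_norm] using hLip.dist_le_mul a b
  have : Nonempty X := ⟨x₀⟩
  -- fixed points of x ↦ x₀ + lam • J' x for 0 ≤ lam, lam * L < 1
  have key : ∀ lam : ℝ, ∃ x : X, 0 ≤ lam → lam * (L : ℝ) < 1 → x = x₀ + lam • J' x := by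
    intro lam
    by_cases h : 0 ≤ lam ∧ lam * (L : ℝ) < 1
    · obtain ⟨h0, h1⟩ := h
      set f : X → X := fun x => x₀ + lam • J' x with hf
      set K : ℝ≥0 := ⟨lam, h0⟩ * L with hK
      have hKr : (K : ℝ) = lam * (L : ℝ) := rfl
      have hlipf : LipschitzWith K f := by
        apply LipschitzWith.of_dist_le_mul
        intro a b
        have hfs : f a - f b = lam • (J' a - J' b) := by
          simp only [hf, smul_sub]
          abel
        rw [dist_eq_norm, hfs, norm_smul, dist_eq_norm, hKr, Real.norm_eq_abs,
          abs_of_nonneg h0]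
        calc lam * ‖J' a - J' b‖ ≤ lam * ((L : ℝ) * ‖a - b‖) :=
              mul_le_mul_of_nonneg_left (hlip a b) h0
          _ = lam * (L : ℝ) * ‖a - b‖ := by ring
      have hKlt : K < 1 := by
        rw [← NNReal.coe_lt_coe, hKr]
        simpa using h1
      have hcw : ContractingWith K f := ⟨hKlt, hlipf⟩
      exact ⟨ContractingWith.fixedPoint f hcw, fun _ _ =>
        (ContractingWith.fixedPoint_isFixedPt hcw).symm⟩
    · exact ⟨x₀, fun h0 h1 => absurd ⟨h0, h1⟩ h⟩
  choose xsel hxsel using key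
  -- Fact B: monotonicity/Cauchy estimate
  have factB : ∀ a b : ℝ, 0 ≤ a → a ≤ b → b * (L : ℝ) < 1 →
      (L : ℝ) / 2 * ‖xsel b - xsel a‖ ^ 2 ≤ J (xsel b) - J (xsel a) := by
    intro a b ha hab hb1
    have ha1 : a * (L : ℝ) < 1 := lt_of_le_of_lt (mul_le_mul_of_nonneg_right hab hl0.le) hb1
    have hb0 : 0 ≤ b := ha.trans hab
    have hu := hxsel a ha ha1
    have hv := hxsel b hb0 hb1
    have h1 := strongmin_aux J J' hgrad (L : ℝ) hlip x₀ a ha (xsel a) hu (xsel b)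
    have h2 := strongmin_aux J J' hgrad (L : ℝ) hlip x₀ b hb0 (xsel b) hv (xsel a)
    rw [norm_sub_rev (xsel a) (xsel b)] at h2
    rcases eq_or_lt_of_le hab with rfl | hlt
    · simp
    · have hn : (0 : ℝ) ≤ ‖xsel b - xsel a‖ ^ 2 := sq_nonneg _
      have hmain : (b - a) * ((L : ℝ) / 2 * ‖xsel b - xsel a‖ ^ 2) ≤
          (b - a) * (J (xsel b) - J (xsel a)) := by nlinarith
      exact le_of_mul_le_mul_left hmain (sub_pos.2 hlt)
  -- Fact D: the value r is reached below the parameter 1/L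
  have factD : ∃ c : ℝ, 0 ≤ c ∧ c * (L : ℝ) < 1 ∧ r ≤ J (xsel c) := by
    by_contra hcon
    push_neg at hcon
    set s : ℕ → ℝ := fun n => 1 / (L : ℝ) - 1 / (((n : ℝ) + 1) * (L : ℝ)) with hs
    have hs0 : ∀ n, 0 ≤ s n := by
      intro n
      have h1 : 1 / (((n : ℝ) + 1) * (L : ℝ)) ≤ 1 / (L : ℝ) := by
        apply div_le_div_of_nonneg_left one_pos.le hl0
        nlinarith [Nat.cast_nonneg (α := ℝ) n]
      simpa [hs] using sub_nonneg.2 h1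
    have hsl : ∀ n, s n * (L : ℝ) < 1 := by
      intro n
      have hne : ((n : ℝ) + 1) ≠ 0 := by positivity
      have : s n * (L : ℝ) = 1 - 1 / ((n : ℝ) + 1) := by
        simp only [hs]
        field_simp
      rw [this]
      have : 0 < 1 / ((n : ℝ) + 1) := by positivity
      linarith
    have hsmono : Monotone s := by
      intro n m hnm
      have h1 : 1 / (((m : ℝ) + 1) * (L : ℝ)) ≤ 1 / (((n : ℝ) + 1) * (L : ℝ)) := by
        apply div_le_div_of_nonneg_left one_pos.le (by positivity)
        have : (n : ℝ) ≤ (m : ℝ) := Nat.cast_le.2 hnm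
        nlinarith
      simp only [hs]
      linarith
    set u : ℕ → X := fun n => xsel (s n) with hudef
    have hufix : ∀ n, u n = x₀ + s n • J' (u n) := fun n => hxsel _ (hs0 n) (hsl n)
    set θ : ℕ → ℝ := fun n => J (u n) with hθdef
    have hθmono : Monotone θ := by
      intro n m hnm
      have := factB (s n) (s m) (hs0 n) (hsmono hnm) (hsl m)
      nlinarith [sq_nonneg ‖u m - u n‖]
    have hbdd : ∀ n, θ n < r := fun n => hcon _ (hs0 n) (hsl n)
    have hθtend : Tendsto θ atTop (nhds (⨆ n, θ n)) :=
      tendsto_atTop_ciSup hθmono ⟨r, by rintro x ⟨n, rfl⟩; exact (hbdd n).le⟩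
    have hθcauchy := hθtend.cauchySeq
    have hucauchy : CauchySeq u := by
      rw [Metric.cauchySeq_iff']
      intro ε hε
      obtain ⟨N, hN⟩ := Metric.cauchySeq_iff'.1 hθcauchy ((L : ℝ) / 2 * ε ^ 2) (by positivity)
      refine ⟨N, fun n hn => ?_⟩
      have h1 := factB (s N) (s n) (hs0 N) (hsmono hn) (hsl n)
      have h2 := hN n hn
      rw [Real.dist_eq, abs_of_nonneg (sub_nonneg.2 (hθmono hn))] at h2
      rw [dist_eq_norm]
      have h3 : ‖u n - u N‖ ^ 2 < ε ^ 2 := by nlinarith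
      exact lt_of_pow_lt_pow_left₀ 2 hε.le h3
    obtain ⟨y, hy⟩ := cauchySeq_tendsto_of_complete hucauchy
    have hslim : Tendsto s atTop (nhds (1 / (L : ℝ))) := by
      have h1 : Tendsto (fun n : ℕ => 1 / ((n : ℝ) + 1)) atTop (nhds 0) :=
        tendsto_one_div_add_atTop_nhds_zero_nat
      have h2 : Tendsto (fun n : ℕ => 1 / ((n : ℝ) + 1) * (1 / (L : ℝ))) atTop
          (nhds (0 * (1 / (L : ℝ)))) := h1.mul_const _
      rw [zero_mul] at h2
      have heq : ∀ n : ℕ, s n = 1 / (L : ℝ) - 1 / ((n : ℝ) + 1) * (1 / (L : ℝ)) := by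
        intro n
        have hne : ((n : ℝ) + 1) ≠ 0 := by positivity
        simp only [hs]
        field_simp
      have := (tendsto_const_nhds (x := 1 / (L : ℝ)) (f := atTop (α := ℕ))).sub h2
      rw [sub_zero] at this
      exact this.congr fun n => (heq n).symm
    have hyfix : y = x₀ + (1 / (L : ℝ)) • J' y := by
      have h1 : Tendsto (fun n => x₀ + s n • J' (u n)) atTop
          (nhds (x₀ + (1 / (L : ℝ)) • J' y)) :=
        tendsto_const_nhds.add (hslim.smul ((hcont.tendsto y).comp hy))
      have h2 : Tendsto u atTop (nhds (x₀ + (1 / (L : ℝ)) • J' y)) :=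
        h1.congr fun n => (hufix n).symm
      exact tendsto_nhds_unique hy h2
    have hyM : y ∈ M := by
      rw [hM, Set.mem_setOf_eq]
      intro x
      have hnn : (0 : ℝ) ≤ 1 / (L : ℝ) := by positivity
      have hsm := strongmin_aux J J' hgrad (L : ℝ) hlip x₀ (1 / (L : ℝ)) hnn y hyfix x
      have hll : 1 - 1 / (L : ℝ) * (L : ℝ) = 0 := by field_simp; ring
      rw [hll] at hsm
      simp only [zero_div, zero_mul, add_zero] at hsm
      linarith
    have hrJy : r < J y := by
      have h1 : (r : EReal) < (J y : EReal) := lt_of_lt_of_le hr₂ (iInf₂_le y hyM)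
      exact_mod_cast h1
    have hθy : Tendsto θ atTop (nhds (J y)) := (hJcont.tendsto y).comp hy
    have hJyr : J y ≤ r := le_of_tendsto hθy (Eventually.of_forall fun n => (hbdd n).le)
    linarith
  obtain ⟨c, hc0, hc1, hcr⟩ := factD
  -- continuity of lam ↦ J (xsel lam) on [0, c]
  have hBpos : 0 < 1 - c * (L : ℝ) := by linarith
  have hJ'bound : ∀ b : ℝ, 0 ≤ b → b ≤ c → ‖J' (xsel b)‖ ≤ ‖J' x₀‖ / (1 - c * (L : ℝ)) := by
    intro b hb0 hbc
    have hb1 : b * (L : ℝ) < 1 := lt_of_le_of_lt (mul_le_mul_of_nonneg_right hbc hl0.le) hc1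
    have hfix := hxsel b hb0 hb1
    have h2 : xsel b - x₀ = b • J' (xsel b) := by
      conv_lhs => rw [hfix]
      abel
    have h3 : ‖xsel b - x₀‖ = b * ‖J' (xsel b)‖ := by
      rw [h2, norm_smul, Real.norm_eq_abs, abs_of_nonneg hb0]
    have h4 : ‖J' (xsel b)‖ - ‖J' x₀‖ ≤ (L : ℝ) * (b * ‖J' (xsel b)‖) := by
      calc ‖J' (xsel b)‖ - ‖J' x₀‖ ≤ ‖J' (xsel b) - J' x₀‖ := norm_sub_norm_le _ _
        _ ≤ (L : ℝ) * ‖xsel b - x₀‖ := hlip _ _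
        _ = (L : ℝ) * (b * ‖J' (xsel b)‖) := by rw [h3]
    rw [le_div_iff₀ hBpos]
    nlinarith [norm_nonneg (J' (xsel b)), mul_le_mul_of_nonneg_right hbc hl0.le]
  have hxsel_lip : ∀ a b : ℝ, 0 ≤ a → a ≤ c → 0 ≤ b → b ≤ c →
      ‖xsel a - xsel b‖ ≤ |a - b| * (‖J' x₀‖ / (1 - c * (L : ℝ))) / (1 - c * (L : ℝ)) := by
    intro a b ha0 hac hb0 hbc
    have ha1 : a * (L : ℝ) < 1 := lt_of_le_of_lt (mul_le_mul_of_nonneg_right hac hl0.le) hc1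
    have hb1 : b * (L : ℝ) < 1 := lt_of_le_of_lt (mul_le_mul_of_nonneg_right hbc hl0.le) hc1
    have hua := hxsel a ha0 ha1
    have hub := hxsel b hb0 hb1
    have hdiff : xsel a - xsel b = a • (J' (xsel a) - J' (xsel b)) + (a - b) • J' (xsel b) := by
      conv_lhs => rw [hua, hub]
      rw [smul_sub, sub_smul]
      abel
    have hbound : ‖xsel a - xsel b‖ ≤
        a * ((L : ℝ) * ‖xsel a - xsel b‖) + |a - b| * ‖J' (xsel b)‖ := by
      calc ‖xsel a - xsel b‖ = ‖a • (J' (xsel a) - J' (xsel b)) + (a - b) • J' (xsel b)‖ := by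
            rw [hdiff]
        _ ≤ ‖a • (J' (xsel a) - J' (xsel b))‖ + ‖(a - b) • J' (xsel b)‖ := norm_add_le _ _
        _ ≤ a * ((L : ℝ) * ‖xsel a - xsel b‖) + |a - b| * ‖J' (xsel b)‖ := by
            rw [norm_smul, norm_smul, Real.norm_eq_abs, Real.norm_eq_abs, abs_of_nonneg ha0]
            gcongr
            exact hlip _ _
    have hJb := hJ'bound b hb0 hbc
    have hax : a * (L : ℝ) ≤ c * (L : ℝ) := mul_le_mul_of_nonneg_right hac hl0.le
    rw [le_div_iff₀ hBpos]
    nlinarith [norm_nonneg (xsel a - xsel b), abs_nonneg (a - b),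
      mul_le_mul_of_nonneg_left hJb (abs_nonneg (a - b)),
      mul_nonneg (norm_nonneg (xsel a - xsel b)) (sub_nonneg.2 hax)]
  have hcontθ : ContinuousOn (fun lam => J (xsel lam)) (Set.Icc 0 c) := by
    apply hJcont.comp_continuousOn
    set B : ℝ := ‖J' x₀‖ / (1 - c * (L : ℝ)) / (1 - c * (L : ℝ)) with hB
    have : LipschitzOnWith (Real.toNNReal B) xsel (Set.Icc 0 c) := by
      apply LipschitzOnWith.of_dist_le_mul
      intro p hp q hq
      rw [dist_eq_norm, Real.dist_eq, Real.coe_toNNReal']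
      calc ‖xsel p - xsel q‖ ≤ |p - q| * (‖J' x₀‖ / (1 - c * (L : ℝ))) / (1 - c * (L : ℝ)) :=
            hxsel_lip p q hp.1 hp.2 hq.1 hq.2
        _ = B * |p - q| := by rw [hB]; ring
        _ ≤ (B ⊔ 0) * |p - q| := by
            apply mul_le_mul_of_nonneg_right (le_max_left _ _) (abs_nonneg _)
    exact this.continuousOn
  have h0fix : xsel 0 = x₀ := by
    have := hxsel 0 le_rfl (by simpa using one_pos)
    simpa using this
  have hrmem : r ∈ Set.Icc (J (xsel 0)) (J (xsel c)) := ⟨by rw [h0fix]; exact hr₁.le, hcr⟩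
  obtain ⟨lam, hlammem, hlamr⟩ := intermediate_value_Icc hc0 hcontθ hrmem
  obtain ⟨hlam0, hlamc⟩ := hlammem
  have hlam1 : lam * (L : ℝ) < 1 := lt_of_le_of_lt (mul_le_mul_of_nonneg_right hlamc hl0.le) hc1
  set w : X := xsel lam with hw
  have hwfix : w = x₀ + lam • J' w := hxsel lam hlam0 hlam1
  have hwr : J w = r := hlamr
  have hposc : 0 < (1 - lam * (L : ℝ)) / 2 := by linarith
  have hkey : ∀ x : X, J x = r →
      1 / 2 * ‖w - x₀‖ ^ 2 + (1 - lam * (L : ℝ)) / 2 * ‖x - w‖ ^ 2 ≤ 1 / 2 * ‖x - x₀‖ ^ 2 := by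
    intro x hx
    have := strongmin_aux J J' hgrad (L : ℝ) hlip x₀ lam hlam0 w hwfix x
    rw [hx, hwr] at this
    linarith
  have hle : ∀ x : X, J x = r → ‖w - x₀‖ ≤ ‖x - x₀‖ := by
    intro x hx
    have h1 := hkey x hx
    have h2 : 0 ≤ (1 - lam * (L : ℝ)) / 2 * ‖x - w‖ ^ 2 :=
      mul_nonneg hposc.le (sq_nonneg _)
    apply le_of_pow_le_pow_left₀ two_ne_zero (norm_nonneg _)
    linarith
  have hSne : Set.Nonempty {x : X | J x = r} := ⟨w, hwr⟩
  have hdist : Metric.infDist x₀ {x : X | J x = r} = ‖x₀ - w‖ := by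
    apply le_antisymm
    · have : w ∈ {x : X | J x = r} := hwr
      simpa [dist_eq_norm] using Metric.infDist_le_dist_of_mem this
    · by_contra h
      push_neg at h
      obtain ⟨z, hz, hzd⟩ := (Metric.infDist_lt_iff hSne).1 h
      have hzle := hle z hz
      rw [dist_eq_norm, norm_sub_rev x₀ z] at hzd
      rw [norm_sub_rev w x₀] at hzle
      linarith
  refine ⟨w, ⟨hwr, hdist.symm⟩, ?_⟩
  rintro y ⟨hyr, hyd⟩
  rw [hdist] at hyd
  have h1 := hkey y hyr
  have h2 : ‖y - x₀‖ = ‖w - x₀‖ := by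
    rw [norm_sub_rev y x₀, norm_sub_rev w x₀]
    exact hyd
  have h2' : ‖y - x₀‖ ^ 2 = ‖w - x₀‖ ^ 2 := by rw [h2]
  have h3 : (1 - lam * (L : ℝ)) / 2 * ‖y - w‖ ^ 2 ≤ 0 := by linarith
  have h4 : ‖y - w‖ ^ 2 ≤ 0 := by
    by_contra hpos
    push_neg at hpos
    exact absurd h3 (not_le.2 (mul_pos hposc hpos))
  have h6 : ‖y - w‖ ^ 2 = 0 := le_antisymm h4 (sq_nonneg _)
  have h5 : ‖y - w‖ = 0 := (pow_eq_zero_iff two_ne_zero).1 h6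
  rw [← sub_eq_zero]
  exact norm_eq_zero.1 h5
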